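/- Let λ ∈ ℝ⁴ with λ_1 ≥ λ_2 ≥ λ_3 ≥ λ_4, λ ∈ Γ_3, and σ_3(λ) = σ_1(λ). Denote σ_k(λ|4) the elementary symmetric polynomials of (λ_1,λ_2,λ_3). Then σ_2(λ|4) ≥ 3. -/

import Mathlib

open Real Finset

/-- The `k`-th elementary symmetric polynomial of `x : Fin n → ℝ`. -/
def esymm (n k : ℕ) (x : Fin n → ℝ) : ℝ :=
  ∑ s ∈ (Finset.univ : Finset (Fin n)).powersetCard k, ∏ i ∈ s, x i

lemma esymm41 (x : Fin 4 → ℝ) : esymm 4 1 x = x 0 + x 1 + x 2 + x 3 := by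
  rw [esymm, show ((Finset.univ : Finset (Fin 4)).powersetCard 1) =
      {({0} : Finset (Fin 4)), {1}, {2}, {3}} from by decide]
  rw [Finset.sum_insert (by decide), Finset.sum_insert (by decide),
    Finset.sum_insert (by decide), Finset.sum_singleton]
  simp; ring

lemma esymm42 (x : Fin 4 → ℝ) : esymm 4 2 x =
    x 0 * x 1 + x 0 * x 2 + x 0 * x 3 + x 1 * x 2 + x 1 * x 3 + x 2 * x 3 := by
  rw [esymm, show ((Finset.univ : Finset (Fin 4)).powersetCard 2) =
      {({0,1} : Finset (Fin 4)), {0,2}, {0,3}, {1,2}, {1,3}, {2,3}} from by decide]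
  rw [Finset.sum_insert (by decide), Finset.sum_insert (by decide),
    Finset.sum_insert (by decide), Finset.sum_insert (by decide),
    Finset.sum_insert (by decide), Finset.sum_singleton]
  rw [Finset.prod_insert (by decide), Finset.prod_insert (by decide),
    Finset.prod_insert (by decide), Finset.prod_insert (by decide),
    Finset.prod_insert (by decide), Finset.prod_insert (by decide)]
  simp; ring

lemma esymm43 (x : Fin 4 → ℝ) : esymm 4 3 x =
    x 0 * (x 1 * x 2) + x 0 * (x 1 * x 3) + x 0 * (x 2 * x 3) + x 1 * (x 2 * x 3) := by
  rw [esymm, show ((Finset.univ : Finset (Fin 4)).powersetCard 3) =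
      {({0,1,2} : Finset (Fin 4)), {0,1,3}, {0,2,3}, {1,2,3}} from by decide]
  rw [Finset.sum_insert (by decide), Finset.sum_insert (by decide),
    Finset.sum_insert (by decide), Finset.sum_singleton]
  rw [Finset.prod_insert (by decide), Finset.prod_insert (by decide),
    Finset.prod_insert (by decide), Finset.prod_insert (by decide)]
  simp; ring

lemma esymm32 (x : Fin 3 → ℝ) : esymm 3 2 x = x 0 * x 1 + x 0 * x 2 + x 1 * x 2 := by
  rw [esymm, show ((Finset.univ : Finset (Fin 3)).powersetCard 2) =
      {({0,1} : Finset (Fin 3)), {0,2}, {1,2}} from by decide]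
  rw [Finset.sum_insert (by decide), Finset.sum_insert (by decide), Finset.sum_singleton]
  rw [Finset.prod_insert (by decide), Finset.prod_insert (by decide),
    Finset.prod_insert (by decide)]
  simp; ring

lemma two_var (s1 s2 : ℝ) (h1 : 0 < s1) (h2 : 0 < s2)
    (hB : 4*s2^2 ≥ 9*s1^2) (hA : 3*s1^2 ≥ 8*s2) : s2 ≥ 6 := by
  have h32 : 2*s2 ≥ 3*s1 := by nlinarith
  have hs1 : s1 ≥ 4 := by nlinarith
  nlinarith

lemma main_ineq (a b c d : ℝ) (hab : b ≤ a) (hbc : c ≤ b) (hcd : d ≤ c)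
    (h1 : 0 < a + b + c + d)
    (h2 : 0 < a*b + a*c + a*d + b*c + b*d + c*d)
    (heq : a*(b*c) + a*(b*d) + a*(c*d) + b*(c*d) = a + b + c + d) :
    3 ≤ a * b + a * c + b * c := by
  have hB : 4*(a*b+a*c+a*d+b*c+b*d+c*d)^2 ≥ 9*(a+b+c+d)*(a*b*c+a*b*d+a*c*d+b*c*d) := by
    nlinarith [sq_nonneg (a*b-c*d), sq_nonneg (a*c-b*d), sq_nonneg (a*d-b*c),
      sq_nonneg (a*b+c*d-a*c-b*d), sq_nonneg (a*b+c*d-a*d-b*c),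
      sq_nonneg (a*c+b*d-a*d-b*c), sq_nonneg (a-b), sq_nonneg (c-d),
      sq_nonneg (a*b - a*c - a*d + c*d), sq_nonneg (a*b - b*c - b*d + c*d)]
  have hA : 3*(a+b+c+d)^2 ≥ 8*(a*b+a*c+a*d+b*c+b*d+c*d) := by
    nlinarith [sq_nonneg (a-b), sq_nonneg (a-c), sq_nonneg (a-d), sq_nonneg (b-c),
      sq_nonneg (b-d), sq_nonneg (c-d)]
  have hB' : 4*(a*b+a*c+a*d+b*c+b*d+c*d)^2 ≥ 9*(a+b+c+d)^2 := by nlinarith [hB, heq]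
  have hs2 : a*b+a*c+a*d+b*c+b*d+c*d ≥ 6 := two_var _ _ h1 h2 hB' hA
  have hD : d*(a+b+c) ≤ a*b+a*c+b*c := by
    rcases le_or_gt 0 d with hd0 | hd0
    · have hc0 : 0 ≤ c := le_trans hd0 hcd
      have hb0 : 0 ≤ b := le_trans hc0 hbc
      have ha0 : 0 ≤ a := le_trans hb0 hab
      nlinarith [mul_nonneg hb0 (sub_nonneg.mpr hcd), mul_nonneg ha0 (sub_nonneg.mpr hcd),
        mul_nonneg hc0 (sub_nonneg.mpr (le_trans hcd hbc))]
    · have habc : 0 < a + b + c := by linarith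
      nlinarith [mul_pos (neg_pos.mpr hd0) habc, h2]
  linarith

theorem stmt_11 (lam : Fin 4 → ℝ)
    (hord : ∀ i j : Fin 4, i ≤ j → lam j ≤ lam i)
    (h1 : 0 < esymm 4 1 lam) (h2 : 0 < esymm 4 2 lam) (h3 : 0 < esymm 4 3 lam)
    (heq : esymm 4 3 lam = esymm 4 1 lam) :
    3 ≤ esymm 3 2 (fun i : Fin 3 => lam i.castSucc) := by
  rw [esymm41] at h1 heq
  rw [esymm42] at h2
  rw [esymm43] at heq
  have key := main_ineq (lam 0) (lam 1) (lam 2) (lam 3)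
    (hord 0 1 (by decide)) (hord 1 2 (by decide)) (hord 2 3 (by decide)) h1 h2 heq
  rw [esymm32]
  convert key using 3 <;> rfl
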